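/- There is a one-to-one correspondence between functions F in the class 𝓗 and pairs (ε, G) ∈ {-1,1} × 𝓖, given by ε(F) = ε and log F(e^x, e^y) = max(x,y)·1_{ε=1} + min(x,y)·1_{ε=-1} + ε·G(x−y) for all x,y ∈ ℝ. -/

import Mathlib

open MeasureTheory Filter Set Real
open scoped Classical

/-- The class 𝓗₊. -/
def HPlus (F : ℝ → ℝ → ℝ) : Prop :=
  ContinuousOn (fun p : ℝ × ℝ => F p.1 p.2) {p | 0 < p.1 ∧ 0 < p.2} ∧
  (∀ x y, 0 < x → 0 < y → 0 < F x y) ∧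
  (∀ x x' y y', 0 < x → 0 < y → x ≤ x' → y ≤ y' → F x y ≤ F x' y') ∧
  (∀ a x y, 0 < a → 0 < x → 0 < y → F (a * x) (a * y) = a * F x y) ∧
  (∀ x y, 0 < x → 0 < y → max x y ≤ F x y) ∧
  (∀ y, 0 < y →
    Tendsto (fun x => F x y) (nhdsWithin 0 (Set.Ioi 0)) (nhds y) ∧
    Tendsto (fun x => F y x) (nhdsWithin 0 (Set.Ioi 0)) (nhds y))

/-- The class 𝓗₋. -/
def HMinus (F : ℝ → ℝ → ℝ) : Prop :=
  ContinuousOn (fun p : ℝ × ℝ => F p.1 p.2) {p | 0 < p.1 ∧ 0 < p.2} ∧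
  (∀ x y, 0 < x → 0 < y → 0 < F x y) ∧
  (∀ x x' y y', 0 < x → 0 < y → x ≤ x' → y ≤ y' → F x y ≤ F x' y') ∧
  (∀ a x y, 0 < a → 0 < x → 0 < y → F (a * x) (a * y) = a * F x y) ∧
  (∀ x y, 0 < x → 0 < y → F x y ≤ min x y) ∧
  (∀ y, 0 < y →
    Tendsto (fun x => F x y) atTop (nhds y) ∧
    Tendsto (fun x => F y x) atTop (nhds y))

/-- The associated element F* of 𝓗₊. -/
noncomputable def Fstar (F : ℝ → ℝ → ℝ) : ℝ → ℝ → ℝ :=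
  if HPlus F then F else fun x y => (F x⁻¹ y⁻¹)⁻¹

/-- T_F(t) := sup { z : F*(e^{-t}, e^{-z}) ≥ 1 }. -/
noncomputable def TF (F : ℝ → ℝ → ℝ) (t : ℝ) : ℝ :=
  sSup {z : ℝ | 1 ≤ Fstar F (Real.exp (-t)) (Real.exp (-z))}

/-- T_F^-(t) := inf { z : F*(e^{-t}, e^{-z}) ≤ 1 }. -/
noncomputable def TFminus (F : ℝ → ℝ → ℝ) (t : ℝ) : ℝ :=
  sInf {z : ℝ | Fstar F (Real.exp (-t)) (Real.exp (-z)) ≤ 1}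

/-- r_F := log F*(1,1). -/
noncomputable def rF (F : ℝ → ℝ → ℝ) : ℝ := Real.log (Fstar F 1 1)

/-- Γ_F^{(a,b)} := ∫₀^∞ t^a (T_F(t))^b dt, as an extended nonnegative real. -/
noncomputable def Gamma (F : ℝ → ℝ → ℝ) (a b : ℝ) : ENNReal :=
  ∫⁻ t in Set.Ioi (0 : ℝ), ENNReal.ofReal (t ^ a * (TF F t) ^ b)

/-- F^#(x,y) := F(y,x). -/
def Fsharp (F : ℝ → ℝ → ℝ) : ℝ → ℝ → ℝ := fun x y => F y x

/-- The class 𝓖. -/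
def GClass (G : ℝ → ℝ) : Prop :=
  Continuous G ∧ (∀ z, 0 ≤ G z) ∧
  (∀ z w, 0 ≤ z → z ≤ w → G w ≤ G z ∧ G z - G w ≤ w - z) ∧
  (∀ z w, w ≤ z → z ≤ 0 → G w ≤ G z ∧ G z - G w ≤ z - w) ∧
  Tendsto G atTop (nhds 0) ∧ Tendsto G atBot (nhds 0)


section aux_stmt0

lemma gmono1 {G : ℝ → ℝ} (hG : GClass G) {u u' v : ℝ} (h : u ≤ u') :
    max u v + G (u - v) ≤ max u' v + G (u' - v) := by
  obtain ⟨-, -, hpos, hneg, -, -⟩ := hG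
  rcases le_total v u with hv | hv
  · have h1 := hpos (u - v) (u' - v) (by linarith) (by linarith)
    rw [max_eq_left hv, max_eq_left (hv.trans h)]
    linarith [h1.1, h1.2]
  · rcases le_total u' v with hv' | hv'
    · rw [max_eq_right hv, max_eq_right hv']
      have := (hneg (u' - v) (u - v) (by linarith) (by linarith)).1
      linarith
    · have h1 := (hneg 0 (u - v) (by linarith) le_rfl).1
      have h2 := (hpos 0 (u' - v) le_rfl (by linarith)).2
      rw [max_eq_right hv, max_eq_left hv']
      linarith

lemma gmono2 {G : ℝ → ℝ} (hG : GClass G) {u v v' : ℝ} (h : v ≤ v') :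
    max u v + G (u - v) ≤ max u v' + G (u - v') := by
  obtain ⟨-, -, hpos, hneg, -, -⟩ := hG
  rcases le_total u v with hu | hu
  · rw [max_eq_right hu, max_eq_right (hu.trans h)]
    have := hneg (u - v) (u - v') (by linarith) (by linarith)
    linarith [this.1, this.2]
  · rcases le_total v' u with hu' | hu'
    · rw [max_eq_left hu, max_eq_left hu']
      have := (hpos (u - v') (u - v) (by linarith) (by linarith)).1
      linarith
    · rw [max_eq_left hu, max_eq_right hu']
      have h1 := (hpos 0 (u - v) le_rfl (by linarith)).1
      have h2 := (hneg 0 (u - v') (by linarith) le_rfl).2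
      linarith

lemma gmono1m {G : ℝ → ℝ} (hG : GClass G) {u u' v : ℝ} (h : u ≤ u') :
    min u v - G (u - v) ≤ min u' v - G (u' - v) := by
  obtain ⟨-, -, hpos, hneg, -, -⟩ := hG
  rcases le_total v u with hv | hv
  · rw [min_eq_right hv, min_eq_right (hv.trans h)]
    have := (hpos (u - v) (u' - v) (by linarith) (by linarith)).1
    linarith
  · rcases le_total u' v with hv' | hv'
    · rw [min_eq_left hv, min_eq_left hv']
      have := (hneg (u' - v) (u - v) (by linarith) (by linarith)).2
      linarith
    · rw [min_eq_left hv, min_eq_right hv']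
      have h1 := (hneg 0 (u - v) (by linarith) le_rfl).2
      have h2 := (hpos 0 (u' - v) le_rfl (by linarith)).1
      linarith

lemma gmono2m {G : ℝ → ℝ} (hG : GClass G) {u v v' : ℝ} (h : v ≤ v') :
    min u v - G (u - v) ≤ min u v' - G (u - v') := by
  obtain ⟨-, -, hpos, hneg, -, -⟩ := hG
  rcases le_total u v with hu | hu
  · rw [min_eq_left hu, min_eq_left (hu.trans h)]
    have := (hneg (u - v) (u - v') (by linarith) (by linarith)).1
    linarith
  · rcases le_total v' u with hu' | hu'
    · rw [min_eq_right hu', min_eq_right (h.trans hu')]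
      have := (hpos (u - v') (u - v) (by linarith) (by linarith)).2
      linarith
    · rw [min_eq_right hu, min_eq_left hu']
      have h1 := (hpos 0 (u - v) le_rfl (by linarith)).2
      have h2 := (hneg 0 (u - v') (by linarith) le_rfl).1
      linarith

noncomputable def mkFp (G : ℝ → ℝ) : ℝ → ℝ → ℝ := fun x y =>
  Real.exp (max (Real.log x) (Real.log y) + G (Real.log x - Real.log y))

lemma mkFp_plus {G : ℝ → ℝ} (hG : GClass G) : HPlus (mkFp G) := by
  obtain ⟨hc, hnn, hpos, hneg, htop, hbot⟩ := id hG
  refine ⟨?_, fun _ _ _ _ => Real.exp_pos _, ?_, ?_, ?_, ?_⟩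
  · intro p hp
    apply ContinuousAt.continuousWithinAt
    have h1 : ContinuousAt (fun p : ℝ × ℝ => Real.log p.1) p :=
      (Real.continuousAt_log (ne_of_gt hp.1)).comp continuousAt_fst
    have h2 : ContinuousAt (fun p : ℝ × ℝ => Real.log p.2) p :=
      (Real.continuousAt_log (ne_of_gt hp.2)).comp continuousAt_snd
    exact Real.continuous_exp.continuousAt.comp
      ((h1.max h2).add (hc.continuousAt.comp (h1.sub h2)))
  · intro x x' y y' hx hy hxx hyy
    have l1 : Real.log x ≤ Real.log x' := Real.log_le_log hx hxx
    have l2 : Real.log y ≤ Real.log y' := Real.log_le_log hy hyy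
    exact Real.exp_le_exp.mpr ((gmono1 hG l1).trans (gmono2 hG l2))
  · intro a x y ha hx hy
    unfold mkFp
    rw [Real.log_mul (ne_of_gt ha) (ne_of_gt hx), Real.log_mul (ne_of_gt ha) (ne_of_gt hy)]
    have e1 : Real.log a + Real.log x - (Real.log a + Real.log y) = Real.log x - Real.log y := by
      ring
    rw [e1, max_add_add_left, add_assoc, Real.exp_add, Real.exp_log ha]
  · intro x y hx hy
    have e : max x y = Real.exp (max (Real.log x) (Real.log y)) := by
      rw [Real.exp_monotone.map_max, Real.exp_log hx, Real.exp_log hy]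
    rw [e]
    exact Real.exp_le_exp.mpr (le_add_of_nonneg_right (hnn _))
  · intro y hy
    have hlogbot : Tendsto Real.log (nhdsWithin 0 (Set.Ioi (0:ℝ))) atBot :=
      Real.tendsto_log_nhdsGT_zero
    constructor
    · have key : Tendsto (fun u : ℝ => Real.exp (max u (Real.log y) + G (u - Real.log y)))
          atBot (nhds y) := by
        have h1 : Tendsto (fun u : ℝ => G (u - Real.log y)) atBot (nhds 0) :=
          hbot.comp (by simpa [sub_eq_add_neg] using
            tendsto_atBot_add_const_right atBot (-Real.log y) (tendsto_id (α := ℝ)))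
        have h2 : Tendsto (fun u : ℝ => max u (Real.log y) + G (u - Real.log y)) atBot
            (nhds (Real.log y)) := by
          have hcong : (fun u : ℝ => max u (Real.log y) + G (u - Real.log y)) =ᶠ[atBot]
              fun u => Real.log y + G (u - Real.log y) := by
            filter_upwards [eventually_le_atBot (Real.log y)] with u hu
            rw [max_eq_right hu]
          rw [tendsto_congr' hcong]
          simpa using tendsto_const_nhds.add h1
        have := Real.continuous_exp.continuousAt.tendsto.comp h2
        simpa [Real.exp_log hy, Function.comp_def] using this
      exact key.comp hlogbot
    · have key : Tendsto (fun u : ℝ => Real.exp (max (Real.log y) u + G (Real.log y - u)))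
          atBot (nhds y) := by
        have h1 : Tendsto (fun u : ℝ => G (Real.log y - u)) atBot (nhds 0) :=
          htop.comp (tendsto_atTop_add_const_left atBot (Real.log y) tendsto_neg_atBot_atTop)
        have h2 : Tendsto (fun u : ℝ => max (Real.log y) u + G (Real.log y - u)) atBot
            (nhds (Real.log y)) := by
          have hcong : (fun u : ℝ => max (Real.log y) u + G (Real.log y - u)) =ᶠ[atBot]
              fun u => Real.log y + G (Real.log y - u) := by
            filter_upwards [eventually_le_atBot (Real.log y)] with u hu
            rw [max_eq_left hu]
          rw [tendsto_congr' hcong]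
          simpa using tendsto_const_nhds.add h1
        have := Real.continuous_exp.continuousAt.tendsto.comp h2
        simpa [Real.exp_log hy, Function.comp_def] using this
      exact key.comp hlogbot

noncomputable def mkFm (G : ℝ → ℝ) : ℝ → ℝ → ℝ := fun x y =>
  Real.exp (min (Real.log x) (Real.log y) - G (Real.log x - Real.log y))

lemma mkFm_minus {G : ℝ → ℝ} (hG : GClass G) : HMinus (mkFm G) := by
  obtain ⟨hc, hnn, hpos, hneg, htop, hbot⟩ := id hG
  refine ⟨?_, fun _ _ _ _ => Real.exp_pos _, ?_, ?_, ?_, ?_⟩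
  · intro p hp
    apply ContinuousAt.continuousWithinAt
    have h1 : ContinuousAt (fun p : ℝ × ℝ => Real.log p.1) p :=
      (Real.continuousAt_log (ne_of_gt hp.1)).comp continuousAt_fst
    have h2 : ContinuousAt (fun p : ℝ × ℝ => Real.log p.2) p :=
      (Real.continuousAt_log (ne_of_gt hp.2)).comp continuousAt_snd
    exact Real.continuous_exp.continuousAt.comp
      ((h1.min h2).sub (hc.continuousAt.comp (h1.sub h2)))
  · intro x x' y y' hx hy hxx hyy
    have l1 : Real.log x ≤ Real.log x' := Real.log_le_log hx hxx
    have l2 : Real.log y ≤ Real.log y' := Real.log_le_log hy hyy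
    exact Real.exp_le_exp.mpr ((gmono1m hG l1).trans (gmono2m hG l2))
  · intro a x y ha hx hy
    unfold mkFm
    rw [Real.log_mul (ne_of_gt ha) (ne_of_gt hx), Real.log_mul (ne_of_gt ha) (ne_of_gt hy)]
    have e1 : Real.log a + Real.log x - (Real.log a + Real.log y) = Real.log x - Real.log y := by
      ring
    rw [e1, min_add_add_left, add_sub_assoc, Real.exp_add, Real.exp_log ha]
  · intro x y hx hy
    have e : min x y = Real.exp (min (Real.log x) (Real.log y)) := by
      rw [Real.exp_monotone.map_min, Real.exp_log hx, Real.exp_log hy]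
    rw [e]
    exact Real.exp_le_exp.mpr (by linarith [hnn (Real.log x - Real.log y)])
  · intro y hy
    constructor
    · have key : Tendsto (fun u : ℝ => Real.exp (min u (Real.log y) - G (u - Real.log y)))
          atTop (nhds y) := by
        have h1 : Tendsto (fun u : ℝ => G (u - Real.log y)) atTop (nhds 0) :=
          htop.comp (by simpa [sub_eq_add_neg] using
            tendsto_atTop_add_const_right atTop (-Real.log y) (tendsto_id (α := ℝ)))
        have h2 : Tendsto (fun u : ℝ => min u (Real.log y) - G (u - Real.log y)) atTop
            (nhds (Real.log y)) := by
          have hcong : (fun u : ℝ => min u (Real.log y) - G (u - Real.log y)) =ᶠ[atTop]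
              fun u => Real.log y - G (u - Real.log y) := by
            filter_upwards [eventually_ge_atTop (Real.log y)] with u hu
            rw [min_eq_right hu]
          rw [tendsto_congr' hcong]
          simpa using tendsto_const_nhds.sub h1
        have := Real.continuous_exp.continuousAt.tendsto.comp h2
        simpa [Real.exp_log hy, Function.comp_def] using this
      exact key.comp Real.tendsto_log_atTop
    · have key : Tendsto (fun u : ℝ => Real.exp (min (Real.log y) u - G (Real.log y - u)))
          atTop (nhds y) := by
        have h1 : Tendsto (fun u : ℝ => G (Real.log y - u)) atTop (nhds 0) :=
          hbot.comp (tendsto_atBot_add_const_left atTop (Real.log y) tendsto_neg_atTop_atBot)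
        have h2 : Tendsto (fun u : ℝ => min (Real.log y) u - G (Real.log y - u)) atTop
            (nhds (Real.log y)) := by
          have hcong : (fun u : ℝ => min (Real.log y) u - G (Real.log y - u)) =ᶠ[atTop]
              fun u => Real.log y - G (Real.log y - u) := by
            filter_upwards [eventually_ge_atTop (Real.log y)] with u hu
            rw [min_eq_left hu]
          rw [tendsto_congr' hcong]
          simpa using tendsto_const_nhds.sub h1
        have := Real.continuous_exp.continuousAt.tendsto.comp h2
        simpa [Real.exp_log hy, Function.comp_def] using this
      exact key.comp Real.tendsto_log_atTop

noncomputable def Hfun (F : ℝ → ℝ → ℝ) (z : ℝ) : ℝ := Real.log (F (Real.exp z) 1)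

section core
variable {F : ℝ → ℝ → ℝ}
  (hFpos : ∀ x y, 0 < x → 0 < y → 0 < F x y)
  (hFmono : ∀ x x' y y', 0 < x → 0 < y → x ≤ x' → y ≤ y' → F x y ≤ F x' y')
  (hFhom : ∀ a x y, 0 < a → 0 < x → 0 < y → F (a * x) (a * y) = a * F x y)

include hFpos hFhom in
lemma logF_eq (x y : ℝ) :
    Real.log (F (Real.exp x) (Real.exp y)) = y + Hfun F (x - y) := by
  have e1 : Real.exp y * Real.exp (x - y) = Real.exp x := by
    rw [← Real.exp_add, show y + (x - y) = x by ring]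
  have h := hFhom (Real.exp y) (Real.exp (x - y)) 1 (Real.exp_pos _) (Real.exp_pos _) one_pos
  rw [e1, mul_one] at h
  rw [h, Real.log_mul (Real.exp_ne_zero y)
    (ne_of_gt (hFpos _ _ (Real.exp_pos _) one_pos)), Real.log_exp, Hfun]

include hFpos hFmono in
lemma Hfun_mono {z w : ℝ} (h : z ≤ w) : Hfun F z ≤ Hfun F w :=
  Real.log_le_log (hFpos _ _ (Real.exp_pos _) one_pos)
    (hFmono _ _ _ _ (Real.exp_pos _) one_pos (Real.exp_le_exp.mpr h) le_rfl)

include hFpos hFmono hFhom in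
lemma Hfun_lip {z w : ℝ} (h : z ≤ w) : Hfun F w ≤ Hfun F z + (w - z) := by
  have e1 : Real.exp (w - z) * Real.exp z = Real.exp w := by rw [← Real.exp_add, show w - z + z = w by ring]
  have e2 : Real.exp (w - z) * Real.exp (z - w) = 1 := by rw [← Real.exp_add, show w - z + (z - w) = 0 by ring, Real.exp_zero]
  have h3 := hFhom (Real.exp (w - z)) (Real.exp z) (Real.exp (z - w)) (Real.exp_pos _)
    (Real.exp_pos _) (Real.exp_pos _)
  rw [e1, e2] at h3
  have h4 : F (Real.exp z) (Real.exp (z - w)) ≤ F (Real.exp z) 1 :=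
    hFmono _ _ _ _ (Real.exp_pos _) (Real.exp_pos _) le_rfl
      (Real.exp_le_one_iff.mpr (by linarith))
  have h5 : F (Real.exp w) 1 ≤ Real.exp (w - z) * F (Real.exp z) 1 := by
    rw [h3]
    exact mul_le_mul_of_nonneg_left h4 (le_of_lt (Real.exp_pos _))
  calc Hfun F w ≤ Real.log (Real.exp (w - z) * F (Real.exp z) 1) :=
        Real.log_le_log (hFpos _ _ (Real.exp_pos _) one_pos) h5
    _ = Hfun F z + (w - z) := by
        rw [Real.log_mul (Real.exp_ne_zero _)
          (ne_of_gt (hFpos _ _ (Real.exp_pos _) one_pos)), Real.log_exp, Hfun, add_comm]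

include hFpos hFhom in
lemma Hfun_shift (z : ℝ) : Hfun F z - z = Real.log (F 1 (Real.exp (-z))) := by
  have e1 : Real.exp (-z) * Real.exp z = 1 := by rw [← Real.exp_add, show -z + z = 0 by ring, Real.exp_zero]
  have h := hFhom (Real.exp (-z)) (Real.exp z) 1 (Real.exp_pos _) (Real.exp_pos _) one_pos
  rw [e1, mul_one] at h
  rw [h, Real.log_mul (Real.exp_ne_zero _)
    (ne_of_gt (hFpos _ _ (Real.exp_pos _) one_pos)), Real.log_exp, Hfun]
  ring

include hFpos in
lemma Hfun_cont (hFc : ContinuousOn (fun p : ℝ × ℝ => F p.1 p.2) {p | 0 < p.1 ∧ 0 < p.2}) :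
    Continuous (Hfun F) := by
  rw [continuous_iff_continuousAt]
  intro z
  have hopen : IsOpen {p : ℝ × ℝ | 0 < p.1 ∧ 0 < p.2} :=
    (isOpen_lt continuous_const continuous_fst).inter (isOpen_lt continuous_const continuous_snd)
  have hca : ContinuousAt (fun p : ℝ × ℝ => F p.1 p.2) (Real.exp z, 1) :=
    hFc.continuousAt (hopen.mem_nhds ⟨Real.exp_pos z, one_pos⟩)
  have hpair : ContinuousAt (fun z : ℝ => (Real.exp z, (1:ℝ))) z :=
    (Real.continuous_exp.prodMk continuous_const).continuousAt
  have h1 : ContinuousAt (fun z : ℝ => F (Real.exp z) 1) z :=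
    ContinuousAt.comp (g := fun p : ℝ × ℝ => F p.1 p.2)
      (f := fun z : ℝ => (Real.exp z, (1:ℝ))) (x := z) hca hpair
  show ContinuousAt (fun z => Real.log (F (Real.exp z) 1)) z
  exact ContinuousAt.comp (g := Real.log)
    (Real.continuousAt_log (ne_of_gt (hFpos _ _ (Real.exp_pos _) one_pos))) h1

end core

lemma exp_tendsto_Ioi : Tendsto Real.exp atBot (nhdsWithin 0 (Set.Ioi (0:ℝ))) :=
  tendsto_nhdsWithin_of_tendsto_nhds_of_eventually_within _ Real.tendsto_exp_atBot
    (Eventually.of_forall fun z => Real.exp_pos z)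

lemma not_both {F : ℝ → ℝ → ℝ} (hP : HPlus F) (hM : HMinus F) : False := by
  have h1 := hP.2.2.2.2.1 1 2 one_pos two_pos
  have h2 := hM.2.2.2.2.1 1 2 one_pos two_pos
  rw [show max (1:ℝ) 2 = 2 by norm_num] at h1
  rw [show min (1:ℝ) 2 = 1 by norm_num] at h2
  linarith

noncomputable def Gp (F : ℝ → ℝ → ℝ) : ℝ → ℝ := fun z => Hfun F z - max z 0
noncomputable def Gm (F : ℝ → ℝ → ℝ) : ℝ → ℝ := fun z => min z 0 - Hfun F z

lemma max_split (x y : ℝ) : max x y = y + max (x - y) 0 := by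
  rcases le_total x y with h | h
  · rw [max_eq_right h, max_eq_right (by linarith : x - y ≤ (0:ℝ))]; ring
  · rw [max_eq_left h, max_eq_left (by linarith : (0:ℝ) ≤ x - y)]; ring

lemma min_split (x y : ℝ) : min x y = y + min (x - y) 0 := by
  rcases le_total x y with h | h
  · rw [min_eq_left h, min_eq_left (by linarith : x - y ≤ (0:ℝ))]; ring
  · rw [min_eq_right h, min_eq_right (by linarith : (0:ℝ) ≤ x - y)]; ring

lemma Gp_spec {F : ℝ → ℝ → ℝ} (hP : HPlus F) :
    GClass (Gp F) ∧ ∀ x y : ℝ, Real.log (F (Real.exp x) (Real.exp y))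
      = max x y + Gp F (x - y) := by
  obtain ⟨hc, hpos, hmono, hhom, hge, hlim⟩ := hP
  have hHge : ∀ z, max z 0 ≤ Hfun F z := by
    intro z
    have h1 : Real.exp (max z 0) ≤ F (Real.exp z) 1 := by
      rw [Real.exp_monotone.map_max, Real.exp_zero]
      exact hge _ _ (Real.exp_pos _) one_pos
    calc max z 0 = Real.log (Real.exp (max z 0)) := (Real.log_exp _).symm
      _ ≤ Hfun F z := Real.log_le_log (Real.exp_pos _) h1
  have hHbot : Tendsto (Hfun F) atBot (nhds 0) := by
    have h1 : Tendsto (fun z => F (Real.exp z) 1) atBot (nhds 1) :=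
      (hlim 1 one_pos).1.comp exp_tendsto_Ioi
    have := (Real.continuousAt_log one_ne_zero).tendsto.comp h1
    show Tendsto (fun z => Real.log (F (Real.exp z) 1)) _ _
    simpa [Function.comp_def] using this
  have hHtop : Tendsto (fun z => Hfun F z - z) atTop (nhds 0) := by
    have heq : (fun z => Hfun F z - z) = fun z => Real.log (F 1 (Real.exp (-z))) :=
      funext (Hfun_shift hpos hhom)
    rw [heq]
    have hneg : Tendsto (fun z : ℝ => Real.exp (-z)) atTop (nhdsWithin 0 (Set.Ioi (0:ℝ))) :=
      exp_tendsto_Ioi.comp tendsto_neg_atTop_atBot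
    have h1 : Tendsto (fun z => F 1 (Real.exp (-z))) atTop (nhds 1) :=
      (hlim 1 one_pos).2.comp hneg
    simpa [Function.comp_def] using (Real.continuousAt_log one_ne_zero).tendsto.comp h1
  constructor
  · refine ⟨(Hfun_cont hpos hc).sub (continuous_id.max continuous_const), ?_, ?_, ?_, ?_, ?_⟩
    · intro z; have := hHge z; simp only [Gp]; linarith
    · intro z w hz hzw
      have m := Hfun_mono hpos hmono hzw
      have l := Hfun_lip hpos hmono hhom hzw
      simp only [Gp]
      rw [max_eq_left hz, max_eq_left (hz.trans hzw)]
      constructor <;> linarith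
    · intro z w hwz hz0
      have m := Hfun_mono hpos hmono hwz
      have l := Hfun_lip hpos hmono hhom hwz
      simp only [Gp]
      rw [max_eq_right hz0, max_eq_right (hwz.trans hz0)]
      constructor <;> linarith
    · have hcong : Gp F =ᶠ[atTop] fun z => Hfun F z - z := by
        filter_upwards [eventually_ge_atTop (0:ℝ)] with z hz
        simp only [Gp]; rw [max_eq_left hz]
      rw [tendsto_congr' hcong]; exact hHtop
    · have hcong : Gp F =ᶠ[atBot] Hfun F := by
        filter_upwards [eventually_le_atBot (0:ℝ)] with z hz
        simp only [Gp]; rw [max_eq_right hz, sub_zero]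
      rw [tendsto_congr' hcong]; exact hHbot
  · intro x y
    rw [logF_eq hpos hhom, max_split x y]
    simp only [Gp]; ring

lemma Gm_spec {F : ℝ → ℝ → ℝ} (hM : HMinus F) :
    GClass (Gm F) ∧ ∀ x y : ℝ, Real.log (F (Real.exp x) (Real.exp y))
      = min x y + (-1) * Gm F (x - y) := by
  obtain ⟨hc, hpos, hmono, hhom, hle, hlim⟩ := hM
  have hHle : ∀ z, Hfun F z ≤ min z 0 := by
    intro z
    have h1 : F (Real.exp z) 1 ≤ Real.exp (min z 0) := by
      rw [Real.exp_monotone.map_min, Real.exp_zero]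
      exact hle _ _ (Real.exp_pos _) one_pos
    calc Hfun F z ≤ Real.log (Real.exp (min z 0)) :=
          Real.log_le_log (hpos _ _ (Real.exp_pos _) one_pos) h1
      _ = min z 0 := Real.log_exp _
  have hHtop : Tendsto (Hfun F) atTop (nhds 0) := by
    have h1 : Tendsto (fun z => F (Real.exp z) 1) atTop (nhds 1) :=
      (hlim 1 one_pos).1.comp Real.tendsto_exp_atTop
    show Tendsto (fun z => Real.log (F (Real.exp z) 1)) _ _
    simpa [Function.comp_def] using (Real.continuousAt_log one_ne_zero).tendsto.comp h1
  have hHbot : Tendsto (fun z => Hfun F z - z) atBot (nhds 0) := by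
    have heq : (fun z => Hfun F z - z) = fun z => Real.log (F 1 (Real.exp (-z))) :=
      funext (Hfun_shift hpos hhom)
    rw [heq]
    have hneg : Tendsto (fun z : ℝ => Real.exp (-z)) atBot atTop :=
      Real.tendsto_exp_atTop.comp tendsto_neg_atBot_atTop
    have h1 : Tendsto (fun z => F 1 (Real.exp (-z))) atBot (nhds 1) :=
      (hlim 1 one_pos).2.comp hneg
    simpa [Function.comp_def] using (Real.continuousAt_log one_ne_zero).tendsto.comp h1
  constructor
  · refine ⟨(continuous_id.min continuous_const).sub (Hfun_cont hpos hc), ?_, ?_, ?_, ?_, ?_⟩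
    · intro z; have := hHle z; simp only [Gm]; linarith
    · intro z w hz hzw
      have m := Hfun_mono hpos hmono hzw
      have l := Hfun_lip hpos hmono hhom hzw
      simp only [Gm]
      rw [min_eq_right hz, min_eq_right (hz.trans hzw)]
      constructor <;> linarith
    · intro z w hwz hz0
      have m := Hfun_mono hpos hmono hwz
      have l := Hfun_lip hpos hmono hhom hwz
      simp only [Gm]
      rw [min_eq_left hz0, min_eq_left (hwz.trans hz0)]
      constructor <;> linarith
    · have hcong : Gm F =ᶠ[atTop] fun z => -Hfun F z := by
        filter_upwards [eventually_ge_atTop (0:ℝ)] with z hz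
        simp only [Gm]; rw [min_eq_right hz, zero_sub]
      rw [tendsto_congr' hcong]
      simpa using hHtop.neg
    · have hcong : Gm F =ᶠ[atBot] fun z => -(Hfun F z - z) := by
        filter_upwards [eventually_le_atBot (0:ℝ)] with z hz
        simp only [Gm]; rw [min_eq_left hz]; ring
      rw [tendsto_congr' hcong]
      simpa using hHbot.neg
  · intro x y
    rw [logF_eq hpos hhom, min_split x y]
    simp only [Gm]; ring

end aux_stmt0

/-- One-to-one correspondence between F ∈ 𝓗 and pairs (ε, G) ∈ {-1,1} × 𝓖 given by
ε(F) = ε and log F(e^x, e^y) = max(x,y)·1_{ε=1} + min(x,y)·1_{ε=-1} + ε·G(x−y). -/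
theorem stmt0 :
    (∀ F : ℝ → ℝ → ℝ, HPlus F ∨ HMinus F →
      ∃! p : ℝ × (ℝ → ℝ),
        ((p.1 = 1 ∧ HPlus F) ∨ (p.1 = -1 ∧ HMinus F)) ∧ GClass p.2 ∧
        (∀ x y : ℝ, Real.log (F (Real.exp x) (Real.exp y)) =
          (if p.1 = 1 then max x y else min x y) + p.1 * p.2 (x - y))) ∧
    (∀ (ε : ℝ) (G : ℝ → ℝ), (ε = 1 ∨ ε = -1) → GClass G →
      ∃ F : ℝ → ℝ → ℝ, (HPlus F ∨ HMinus F) ∧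
        ((ε = 1 ∧ HPlus F) ∨ (ε = -1 ∧ HMinus F)) ∧
        (∀ x y : ℝ, Real.log (F (Real.exp x) (Real.exp y)) =
          (if ε = 1 then max x y else min x y) + ε * G (x - y)) ∧
        (∀ F' : ℝ → ℝ → ℝ, HPlus F' ∨ HMinus F' →
          (∀ x y : ℝ, Real.log (F' (Real.exp x) (Real.exp y)) =
            (if ε = 1 then max x y else min x y) + ε * G (x - y)) →
          ∀ x y : ℝ, 0 < x → 0 < y → F' x y = F x y)) := by
  constructor
  · intro F hF
    rcases hF with hP | hM
    · obtain ⟨hGc, heq⟩ := Gp_spec hP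
      refine ⟨(1, Gp F), ⟨Or.inl ⟨rfl, hP⟩, hGc, ?_⟩, ?_⟩
      · intro x y
        simp only [if_pos rfl, eq_self_iff_true, if_true, one_mul]
        exact heq x y
      · rintro ⟨ε, G'⟩ ⟨hε, hG', heq'⟩
        have hε1 : ε = 1 := by
          rcases hε with ⟨h, -⟩ | ⟨-, hM⟩
          · exact h
          · exact (not_both hP hM).elim
        subst hε1
        rw [Prod.mk.injEq]
        refine ⟨rfl, funext fun z => ?_⟩
        have h1 := heq' z 0
        have h2 := heq z 0
        simp only [if_pos rfl, eq_self_iff_true, if_true, one_mul, sub_zero] at h1 h2 ⊢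
        rw [h2] at h1
        linarith
    · obtain ⟨hGc, heq⟩ := Gm_spec hM
      have hne : ¬((-1:ℝ) = 1) := by norm_num
      refine ⟨(-1, Gm F), ⟨Or.inr ⟨rfl, hM⟩, hGc, ?_⟩, ?_⟩
      · intro x y
        simp only [if_neg hne]
        exact heq x y
      · rintro ⟨ε, G'⟩ ⟨hε, hG', heq'⟩
        have hε1 : ε = -1 := by
          rcases hε with ⟨-, hP⟩ | ⟨h, -⟩
          · exact (not_both hP hM).elim
          · exact h
        subst hε1
        rw [Prod.mk.injEq]
        refine ⟨rfl, funext fun z => ?_⟩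
        have h1 := heq' z 0
        have h2 := heq z 0
        simp only [if_neg hne, sub_zero] at h1 h2
        rw [h2] at h1
        linarith
  · intro ε G hε hG
    rcases hε with rfl | rfl
    · refine ⟨mkFp G, Or.inl (mkFp_plus hG), Or.inl ⟨rfl, mkFp_plus hG⟩, ?_, ?_⟩
      · intro x y
        simp only [if_pos rfl, eq_self_iff_true, if_true, one_mul, mkFp, Real.log_exp]
      · intro F' hF' heq' x y hx hy
        have hF'pos : 0 < F' x y := by
          rcases hF' with h | h <;> exact h.2.1 x y hx hy
        have h1 := heq' (Real.log x) (Real.log y)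
        rw [Real.exp_log hx, Real.exp_log hy, if_pos rfl, one_mul] at h1
        have h2 : F' x y = Real.exp (max (Real.log x) (Real.log y)
            + G (Real.log x - Real.log y)) := by
          rw [← h1, Real.exp_log hF'pos]
        rw [h2]; rfl
    · have hne : ¬((-1:ℝ) = 1) := by norm_num
      refine ⟨mkFm G, Or.inr (mkFm_minus hG), Or.inr ⟨rfl, mkFm_minus hG⟩, ?_, ?_⟩
      · intro x y
        simp only [if_neg hne, mkFm, Real.log_exp]
        ring
      · intro F' hF' heq' x y hx hy
        have hF'pos : 0 < F' x y := by
          rcases hF' with h | h <;> exact h.2.1 x y hx hy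
        have h1 := heq' (Real.log x) (Real.log y)
        rw [Real.exp_log hx, Real.exp_log hy, if_neg hne] at h1
        have h2 : F' x y = Real.exp (min (Real.log x) (Real.log y)
            - G (Real.log x - Real.log y)) := by
          rw [← Real.exp_log hF'pos, h1]; ring_nf
        rw [h2]; rfl
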